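/- Define the integer sequence u by u_0 = 1, u_1 = 0, and for n ≥ 2: u_n = −(n−1) if n = 2^k − 1 for some k ≥ 2, and u_n = 2 otherwise. Then for every n ≥ 0, ∑_{i=0}^{n} u_i = 3 + 2·(n − 2^{⌊log₂(n+1)⌋}); equivalently the partial sums give the Josephus sequence A006257 with general term 2·(n + 1 − 2^{⌊log₂(n+1)⌋}) + 1. -/

import Mathlib

/-- Let `u` be the sequence with `u 0 = 1`, `u 1 = 0`, and for `n ≥ 2`:
`u n = -(n-1)` if `n = 2^k - 1` for some `k ≥ 2`, and `u n = 2` otherwise. Then the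
partial sums satisfy `∑_{i=0}^n u i = 3 + 2·(n - 2^⌊log₂(n+1)⌋)`, the Josephus
sequence A006257 with general term `2·(n + 1 - 2^⌊log₂(n+1)⌋) + 1`. -/
theorem partial_sums_josephus (u : ℕ → ℤ)
    (h0 : u 0 = 1) (h1 : u 1 = 0)
    (hpow : ∀ n : ℕ, 2 ≤ n → (∃ k : ℕ, 2 ≤ k ∧ n = 2 ^ k - 1) →
      u n = -((n : ℤ) - 1))
    (hrest : ∀ n : ℕ, 2 ≤ n → ¬(∃ k : ℕ, 2 ≤ k ∧ n = 2 ^ k - 1) → u n = 2) (n : ℕ) :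
    ∑ i ∈ Finset.range (n + 1), u i = 3 + 2 * ((n : ℤ) - 2 ^ Nat.log 2 (n + 1)) := by
  induction n with
  | zero => simp [h0, Nat.log_one_right]
  | succ n ih =>
    rw [Finset.sum_range_succ, ih]
    rcases Nat.eq_zero_or_pos n with rfl | hn
    · rw [h1, show Nat.log 2 (0+1+1) = 1 from Nat.log_eq_of_pow_le_of_lt_pow (by norm_num) (by norm_num)]
      norm_num
    · have h2 : 2 ≤ n + 1 := by omega
      by_cases hp : ∃ k : ℕ, 2 ≤ k ∧ n + 1 = 2 ^ k - 1
      · obtain ⟨k, hk, hnk⟩ := hp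
        have hk1 : (1:ℕ) ≤ 2 ^ (k - 1) := Nat.one_le_two_pow
        have hpk : 2 ^ k = 2 * 2 ^ (k - 1) := by
          rw [← pow_succ']; congr 1; omega
        have hn2 : n + 2 = 2 ^ k := by omega
        rw [hpow _ h2 ⟨k, hk, hnk⟩]
        have l1 : Nat.log 2 (n + 1) = k - 1 := by
          apply Nat.log_eq_of_pow_le_of_lt_pow
          · omega
          · have : k - 1 + 1 = k := by omega
            rw [this]; omega
        have l2 : Nat.log 2 (n + 1 + 1) = k := by
          rw [show n + 1 + 1 = n + 2 from rfl, hn2]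
          exact Nat.log_pow (b := 2) one_lt_two k
        rw [l1, l2]
        have hc : (n : ℤ) + 2 = 2 ^ k := by exact_mod_cast congrArg (Nat.cast : ℕ → ℤ) hn2
        have hpk' : (2:ℤ) ^ k = 2 * 2 ^ (k - 1) := by exact_mod_cast congrArg (Nat.cast : ℕ → ℤ) hpk
        push_cast
        linarith
      · rw [hrest _ h2 hp]
        have l : Nat.log 2 (n + 1 + 1) = Nat.log 2 (n + 1) := by
          set k := Nat.log 2 (n + 1) with hkdef
          have hk1 : 1 ≤ k := by
            have := Nat.log_pos (b := 2) (by norm_num) h2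
            omega
          have hlow : 2 ^ k ≤ n + 1 := Nat.pow_log_le_self 2 (by omega)
          have hhigh : n + 1 < 2 ^ (k + 1) := Nat.lt_pow_succ_log_self (by norm_num) _
          have hne : n + 2 ≠ 2 ^ (k + 1) := by
            intro h
            exact hp ⟨k + 1, by omega, by omega⟩
          apply Nat.log_eq_of_pow_le_of_lt_pow <;> omega
        rw [l]
        push_cast
        ring
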